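/- Let K be a nonempty set of probability measures on a product space carrying random variables X_1,…,X_n with sup X_i − inf X_i ≤ B_i. Assume that for every P ∈ K and every i, E_P[X_i | X_1,…,X_{i−1}] ≤ Ē[X_i] almost surely (weak irrelevance with disintegrability). Then for γ_n = Σ B_i² > 0 and any ε > 0, P̄(Σ_{i=1}^n (X_i − Ē[X_i]) ≥ ε) ≤ exp(−2ε²/γ_n). -/

import Mathlib

open MeasureTheory

section AuxHoeffding
open Real

lemma hoeffding_core (p : ℝ) (hp0 : 0 ≤ p) (hp1 : p ≤ 1) (u : ℝ) :
    1 - p + p * Real.exp u ≤ Real.exp (p * u + u ^ 2 / 8) := by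
  set D : ℝ → ℝ := fun u => 1 - p + p * Real.exp u with hD
  have hDpos : ∀ u, 0 < D u := by
    intro u
    rcases lt_or_eq_of_le hp1 with h | h
    · have := mul_nonneg hp0 (Real.exp_pos u).le
      simp only [hD]; nlinarith
    · simp only [hD, ← h]; have := Real.exp_pos u; nlinarith
  set g : ℝ → ℝ := fun u => p * u + u ^ 2 / 8 - Real.log (D u) with hg
  set g' : ℝ → ℝ := fun u => p + u / 4 - p * Real.exp u / D u with hg'
  have hd : ∀ u, HasDerivAt D (p * Real.exp u) u := fun u => by
    exact ((Real.hasDerivAt_exp u).const_mul p).const_add (1 - p)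
  have hderiv : ∀ u, HasDerivAt g (g' u) u := by
    intro u
    have hlog : HasDerivAt (fun u => Real.log (D u)) (p * Real.exp u / D u) u :=
      (hd u).log (hDpos u).ne'
    have h2 : HasDerivAt (fun u : ℝ => p * u) p u := by
      simpa using (hasDerivAt_id u).const_mul p
    have h1 : HasDerivAt (fun u : ℝ => p * u + u ^ 2 / 8) (p + u / 4) u := by
      have h3 := h2.add ((hasDerivAt_pow 2 u).div_const 8)
      exact h3.congr_deriv (by rw [show (2:ℕ) - 1 = 1 from rfl]; push_cast; ring)
    exact h1.sub hlog
  have hderiv2 : ∀ u, HasDerivAt g' (1 / 4 - p * (1 - p) * Real.exp u / (D u) ^ 2) u := by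
    intro u
    have hnum : HasDerivAt (fun u => p * Real.exp u) (p * Real.exp u) u :=
      (Real.hasDerivAt_exp u).const_mul p
    have hq : HasDerivAt (fun u => p * Real.exp u / D u)
        ((p * Real.exp u * D u - p * Real.exp u * (p * Real.exp u)) / (D u) ^ 2) u :=
      hnum.div (hd u) (hDpos u).ne'
    have h1 : HasDerivAt (fun u : ℝ => p + u / 4) (1 / 4) u := by
      simpa using ((hasDerivAt_id u).div_const 4).const_add p
    have := h1.sub hq
    refine this.congr_deriv ?_
    have : D u = 1 - p + p * Real.exp u := rfl
    rw [this]; ring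
  have hg'0 : g' 0 = 0 := by
    have : D 0 = 1 := by simp [hD]
    simp [hg', this]
  have hg'nonneg : ∀ u, 0 ≤ u → 0 ≤ g' u := by
    intro u hu
    have hmono : Monotone g' := by
      apply monotone_of_deriv_nonneg (fun x => (hderiv2 x).differentiableAt)
      intro x
      rw [(hderiv2 x).deriv]
      have h1 : 0 < D x := hDpos x
      have h2 : (0:ℝ) < Real.exp x := Real.exp_pos x
      have hdiv : p * (1 - p) * Real.exp x / (D x) ^ 2 ≤ 1 / 4 := by
        rw [div_le_iff₀ (by positivity)]
        have hDx : D x = 1 - p + p * Real.exp x := rfl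
        rw [hDx]
        nlinarith [sq_nonneg ((1 - p) - p * Real.exp x)]
      linarith
    calc (0:ℝ) = g' 0 := hg'0.symm
    _ ≤ g' u := hmono hu
  have hg'nonpos : ∀ u, u ≤ 0 → g' u ≤ 0 := by
    intro u hu
    have hmono : Monotone g' := by
      apply monotone_of_deriv_nonneg (fun x => (hderiv2 x).differentiableAt)
      intro x
      rw [(hderiv2 x).deriv]
      have h1 : 0 < D x := hDpos x
      have h2 : (0:ℝ) < Real.exp x := Real.exp_pos x
      have hdiv : p * (1 - p) * Real.exp x / (D x) ^ 2 ≤ 1 / 4 := by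
        rw [div_le_iff₀ (by positivity)]
        have hDx : D x = 1 - p + p * Real.exp x := rfl
        rw [hDx]
        nlinarith [sq_nonneg ((1 - p) - p * Real.exp x)]
      linarith
    calc g' u ≤ g' 0 := hmono hu
    _ = 0 := hg'0
  have hgnonneg : ∀ u, 0 ≤ g u := by
    intro u
    have hg0 : g 0 = 0 := by simp [hg, hD]
    rcases le_total 0 u with hu | hu
    · have : MonotoneOn g (Set.Ici 0) := by
        apply monotoneOn_of_deriv_nonneg (convex_Ici 0)
          (fun x _ => (hderiv x).differentiableAt.continuousAt.continuousWithinAt)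
          (fun x _ => (hderiv x).differentiableAt.differentiableWithinAt)
        intro x hx
        rw [(hderiv x).deriv]
        exact hg'nonneg x (le_of_lt (by simpa using hx))
      calc (0:ℝ) = g 0 := hg0.symm
      _ ≤ g u := this Set.self_mem_Ici hu hu
    · have : AntitoneOn g (Set.Iic 0) := by
        apply antitoneOn_of_deriv_nonpos (convex_Iic 0)
          (fun x _ => (hderiv x).differentiableAt.continuousAt.continuousWithinAt)
          (fun x _ => (hderiv x).differentiableAt.differentiableWithinAt)
        intro x hx
        rw [(hderiv x).deriv]
        exact hg'nonpos x (le_of_lt (by simpa using hx))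
      calc (0:ℝ) = g 0 := hg0.symm
      _ ≤ g u := this hu Set.self_mem_Iic hu
  have := hgnonneg u
  have hlog : Real.log (D u) ≤ p * u + u ^ 2 / 8 := by
    simp only [hg] at this; linarith
  calc D u = Real.exp (Real.log (D u)) := (Real.exp_log (hDpos u)).symm
  _ ≤ Real.exp (p * u + u ^ 2 / 8) := Real.exp_le_exp.mpr hlog

lemma hoeffding_chord (a b m t : ℝ) (ha : a ≤ m) (hb : m ≤ b) :
    (b - m) * Real.exp (t * a) + (m - a) * Real.exp (t * b) ≤
      (b - a) * Real.exp (t * m + t ^ 2 * (b - a) ^ 2 / 8) := by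
  rcases eq_or_lt_of_le (ha.trans hb) with h | h
  · have hma : m = a := le_antisymm (h ▸ hb) ha
    rw [← h, hma]; simp
  · have hba : (0:ℝ) < b - a := by linarith
    set p : ℝ := (m - a) / (b - a) with hp
    have hp0 : 0 ≤ p := div_nonneg (by linarith) hba.le
    have hp1 : p ≤ 1 := by rw [div_le_one hba]; linarith
    have hcore := hoeffding_core p hp0 hp1 (t * (b - a))
    have hexp : Real.exp (t * b) = Real.exp (t * a) * Real.exp (t * (b - a)) := by
      rw [← Real.exp_add]; ring_nf
    have hL : (b - m) * Real.exp (t * a) + (m - a) * Real.exp (t * b)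
        = (b - a) * Real.exp (t * a) * (1 - p + p * Real.exp (t * (b - a))) := by
      rw [hexp, hp]; field_simp; ring
    have hR : (b - a) * Real.exp (t * m + t ^ 2 * (b - a) ^ 2 / 8)
        = (b - a) * Real.exp (t * a) * Real.exp (p * (t * (b - a)) + (t * (b - a)) ^ 2 / 8) := by
      rw [mul_assoc, ← Real.exp_add]
      congr 2
      rw [hp]; field_simp; ring
    rw [hL, hR]
    apply mul_le_mul_of_nonneg_left hcore (by positivity)

lemma exp_chord (a b y t : ℝ) (hay : a ≤ y) (hyb : y ≤ b) (hab : a < b) :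
    Real.exp (t * y) ≤ (b * Real.exp (t * a) - a * Real.exp (t * b)) / (b - a)
      + ((Real.exp (t * b) - Real.exp (t * a)) / (b - a)) * y := by
  have hba : (0:ℝ) < b - a := by linarith
  have h1 : (0:ℝ) ≤ (b - y) / (b - a) := div_nonneg (by linarith) hba.le
  have h2 : (0:ℝ) ≤ (y - a) / (b - a) := div_nonneg (by linarith) hba.le
  have h3 : (b - y) / (b - a) + (y - a) / (b - a) = 1 := by field_simp; ring
  have hc := convexOn_exp.2 (Set.mem_univ (t * a)) (Set.mem_univ (t * b)) h1 h2 h3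
  simp only [smul_eq_mul] at hc
  have hpt : (b - y) / (b - a) * (t * a) + (y - a) / (b - a) * (t * b) = t * y := by
    field_simp; ring
  rw [hpt] at hc
  calc Real.exp (t * y) ≤ (b - y) / (b - a) * Real.exp (t * a) + (y - a) / (b - a) * Real.exp (t * b) := hc
  _ = (b * Real.exp (t * a) - a * Real.exp (t * b)) / (b - a)
      + ((Real.exp (t * b) - Real.exp (t * a)) / (b - a)) * y := by field_simp; ring

end AuxHoeffding

theorem upper_azuma {Ω : Type*} [m : MeasurableSpace Ω]
    (K : Set (Measure Ω)) (hK : K.Nonempty) (hKp : ∀ P ∈ K, IsProbabilityMeasure P)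
    (n : ℕ) (hn : 0 < n) (X : ℕ → Ω → ℝ) (hmeas : ∀ i, Measurable (X i))
    (B : ℕ → ℝ)
    (hrange : ∀ i ∈ Finset.Icc 1 n, ∀ ω ω', X i ω - X i ω' ≤ B i)
    (𝒢 : ℕ → MeasurableSpace Ω)
    (h𝒢 : ∀ i, 𝒢 i = ⨆ j ∈ Finset.Icc 1 i, MeasurableSpace.comap (X j) inferInstance)
    (hirr : ∀ P ∈ K, ∀ i ∈ Finset.Icc 1 n,
      ∀ᵐ ω ∂P, (P[X i | 𝒢 (i - 1)]) ω ≤ ⨆ Q ∈ K, ∫ ω', X i ω' ∂Q)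
    (γ : ℝ) (hγ : γ = ∑ i ∈ Finset.Icc 1 n, (B i) ^ 2) (hγpos : 0 < γ)
    (ε : ℝ) (hε : 0 < ε) :
    (⨆ P ∈ K,
        (P {ω | ε ≤ ∑ i ∈ Finset.Icc 1 n, (X i ω - ⨆ Q ∈ K, ∫ ω', X i ω' ∂Q)}).toReal) ≤
      Real.exp (-2 * ε ^ 2 / γ) := by
  classical
  set μi : ℕ → ℝ := fun i => ⨆ Q ∈ K, ∫ ω', X i ω' ∂Q with hμi
  suffices h : ∀ P ∈ K,
      (P {ω | ε ≤ ∑ i ∈ Finset.Icc 1 n, (X i ω - μi i)}).toReal ≤ Real.exp (-2 * ε ^ 2 / γ) by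
    refine Real.iSup_le (fun P => Real.iSup_le (fun hP => h P hP) (Real.exp_nonneg _)) (Real.exp_nonneg _)
  intro P hP
  haveI hPprob := hKp P hP
  -- Ω is nonempty
  have hΩ : Nonempty Ω := by
    by_contra hemp
    rw [not_nonempty_iff] at hemp
    have h1 : P Set.univ = 1 := measure_univ
    rw [Set.univ_eq_empty_iff.mpr hemp, measure_empty] at h1
    exact one_ne_zero h1.symm
  obtain ⟨ω₀⟩ := hΩ
  -- σ-algebras
  have hle : ∀ k, 𝒢 k ≤ m := by
    intro k
    rw [h𝒢 k]
    refine iSup_le fun j => iSup_le fun _ => ?_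
    exact (hmeas j).comap_le
  have hmeas𝒢 : ∀ k, ∀ j ∈ Finset.Icc 1 k, Measurable[𝒢 k] (X j) := by
    intro k j hj
    rw [measurable_iff_comap_le, h𝒢 k]
    exact le_iSup_of_le j (le_iSup_of_le hj le_rfl)
  -- boundedness of X i
  have hBnn : ∀ i ∈ Finset.Icc 1 n, 0 ≤ B i := fun i hi => by
    have := hrange i hi ω₀ ω₀; linarith
  have hXbd : ∀ i ∈ Finset.Icc 1 n, ∀ ω, |X i ω| ≤ |X i ω₀| + B i := by
    intro i hi ω
    have h1 := hrange i hi ω ω₀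
    have h2 := hrange i hi ω₀ ω
    rw [abs_le]
    constructor
    · have := neg_abs_le (X i ω₀); linarith
    · have := le_abs_self (X i ω₀); linarith
  have hXint : ∀ i ∈ Finset.Icc 1 n, ∀ Q : Measure Ω, IsProbabilityMeasure Q →
      Integrable (X i) Q := by
    intro i hi Q hQ
    refine (integrable_const (|X i ω₀| + B i)).mono' (hmeas i).aestronglyMeasurable ?_
    exact ae_of_all _ fun ω => by simpa [Real.norm_eq_abs] using hXbd i hi ω
  -- integral of X i against any Q ∈ K is at most |X i ω₀| + B i
  have hintQ_le : ∀ i ∈ Finset.Icc 1 n, ∀ Q ∈ K, ∫ ω', X i ω' ∂Q ≤ |X i ω₀| + B i := by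
    intro i hi Q hQ
    haveI := hKp Q hQ
    calc ∫ ω', X i ω' ∂Q ≤ ∫ _, (|X i ω₀| + B i) ∂Q := by
          refine integral_mono (hXint i hi Q (hKp Q hQ)) (integrable_const _) fun ω => ?_
          exact (le_abs_self _).trans (hXbd i hi ω)
    _ = |X i ω₀| + B i := by simp
  -- lower bound: ∫ X i dP ≤ μi i
  have hμ_ge : ∀ i ∈ Finset.Icc 1 n, ∫ ω', X i ω' ∂P ≤ μi i := by
    intro i hi
    have hbdd : BddAbove (Set.range fun Q : Measure Ω => ⨆ _ : Q ∈ K, ∫ ω', X i ω' ∂Q) := by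
      refine ⟨max (|X i ω₀| + B i) 0, ?_⟩
      rintro x ⟨Q, rfl⟩
      dsimp only
      by_cases hQ : Q ∈ K
      · haveI : Nonempty (Q ∈ K) := ⟨hQ⟩
        rw [ciSup_const]
        exact le_max_of_le_left (hintQ_le i hi Q hQ)
      · haveI : IsEmpty (Q ∈ K) := ⟨hQ⟩
        rw [Real.iSup_of_isEmpty]
        exact le_max_right _ _
    have h1 : (⨆ _ : P ∈ K, ∫ ω', X i ω' ∂P) = ∫ ω', X i ω' ∂P := by
      haveI : Nonempty (P ∈ K) := ⟨hP⟩
      exact ciSup_const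
    calc ∫ ω', X i ω' ∂P = ⨆ _ : P ∈ K, ∫ ω', X i ω' ∂P := h1.symm
    _ ≤ μi i := le_ciSup hbdd P
  -- Chernoff parameter
  set t : ℝ := 4 * ε / γ with ht
  have htpos : 0 < t := by positivity
  set Y : ℕ → Ω → ℝ := fun i ω => X i ω - μi i with hYdef
  set a : ℕ → ℝ := fun i => sInf (Set.range (X i)) - μi i with hadef
  have hrangene : ∀ i, (Set.range (X i)).Nonempty := fun i => ⟨X i ω₀, ω₀, rfl⟩
  have hbddbelow : ∀ i ∈ Finset.Icc 1 n, BddBelow (Set.range (X i)) := by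
    intro i hi
    exact ⟨X i ω₀ - B i, by rintro y ⟨ω, rfl⟩; have := hrange i hi ω₀ ω; linarith⟩
  have hYlb : ∀ i ∈ Finset.Icc 1 n, ∀ ω, a i ≤ Y i ω := by
    intro i hi ω
    have h1 := csInf_le (hbddbelow i hi) (Set.mem_range_self (f := X i) ω)
    simp only [hYdef, hadef]
    linarith
  have hYub : ∀ i ∈ Finset.Icc 1 n, ∀ ω, Y i ω ≤ a i + B i := by
    intro i hi ω
    have h1 : X i ω - B i ≤ sInf (Set.range (X i)) := by
      refine le_csInf (hrangene i) ?_
      rintro y ⟨ω', rfl⟩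
      have := hrange i hi ω ω'; linarith
    simp only [hYdef, hadef]
    linarith
  have ha0 : ∀ i ∈ Finset.Icc 1 n, a i ≤ 0 := by
    intro i hi
    have h1 : sInf (Set.range (X i)) ≤ ∫ ω', X i ω' ∂P := by
      calc sInf (Set.range (X i)) = ∫ _, sInf (Set.range (X i)) ∂P := by simp
      _ ≤ ∫ ω', X i ω' ∂P :=
          integral_mono (integrable_const _) (hXint i hi P hPprob)
            (fun ω => csInf_le (hbddbelow i hi) (Set.mem_range_self ω))
    have h2 := hμ_ge i hi
    simp only [hadef]
    linarith
  have hYint : ∀ i ∈ Finset.Icc 1 n, Integrable (Y i) P :=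
    fun i hi => (hXint i hi P hPprob).sub (integrable_const _)
  have hIntBdd : ∀ f : Ω → ℝ, Measurable f → (∃ C : ℝ, ∀ ω, |f ω| ≤ C) → Integrable f P := by
    rintro f hf ⟨C, hC⟩
    exact (integrable_const C).mono' hf.aestronglyMeasurable
      (ae_of_all _ fun ω => by simpa [Real.norm_eq_abs] using hC ω)
  have hYmeas : ∀ i, Measurable (Y i) := fun i => (hmeas i).sub measurable_const
  have hexpYint : ∀ i ∈ Finset.Icc 1 n, Integrable (fun ω => Real.exp (t * Y i ω)) P := by
    intro i hi
    refine hIntBdd _ (Real.measurable_exp.comp ((hYmeas i).const_mul t)) ?_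
    refine ⟨Real.exp (t * (a i + B i)), fun ω => ?_⟩
    rw [abs_of_pos (Real.exp_pos _)]
    exact Real.exp_le_exp.mpr (mul_le_mul_of_nonneg_left (hYub i hi ω) htpos.le)
  -- conditional Hoeffding bound
  have hcond : ∀ i ∈ Finset.Icc 1 n,
      (P[fun ω => Real.exp (t * Y i ω) | 𝒢 (i - 1)]) ≤ᵐ[P]
        fun _ => Real.exp (t ^ 2 * B i ^ 2 / 8) := by
    intro i hi
    have hm0 : ∀ᵐ ω ∂P, (P[Y i | 𝒢 (i - 1)]) ω ≤ 0 := by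
      have hsub := condExp_sub (m := 𝒢 (i - 1)) (μ := P)
        (hXint i hi P hPprob) (integrable_const (μi i))
      have hconst := condExp_const (hle (i - 1)) (μi i) (μ := P)
      filter_upwards [hsub, hirr P hP i hi] with ω h1 h2
      have h3 : Y i = X i - fun _ => μi i := rfl
      rw [h3, h1]
      simp only [Pi.sub_apply, hconst]
      linarith
    have hmb : ∀ᵐ ω ∂P, (P[Y i | 𝒢 (i - 1)]) ω ≤ a i + B i := by
      have h1 := condExp_mono (m := 𝒢 (i - 1)) (hYint i hi)
        (integrable_const (a i + B i)) (ae_of_all _ (hYub i hi))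
      have hconst := condExp_const (hle (i - 1)) (a i + B i) (μ := P)
      filter_upwards [h1] with ω h2
      calc (P[Y i | 𝒢 (i - 1)]) ω ≤ (P[(fun _ => a i + B i) | 𝒢 (i - 1)]) ω := h2
      _ = a i + B i := by rw [hconst]
    rcases eq_or_lt_of_le (hBnn i hi) with hB0 | hBpos
    · -- degenerate case B i = 0
      have h1 : ∀ ω, Real.exp (t * Y i ω) ≤ 1 := by
        intro ω
        rw [← Real.exp_zero]
        refine Real.exp_le_exp.mpr ?_
        have h2 := hYub i hi ω
        have h3 := ha0 i hi
        have h4 : Y i ω ≤ 0 := by linarith [hB0.symm ▸ h2]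
        exact mul_nonpos_of_nonneg_of_nonpos htpos.le h4
      have h5 := condExp_mono (m := 𝒢 (i - 1)) (hexpYint i hi)
        (integrable_const 1) (ae_of_all _ h1)
      have hconst := condExp_const (hle (i - 1)) (1 : ℝ) (μ := P)
      filter_upwards [h5] with ω h6
      calc (P[(fun ω => Real.exp (t * Y i ω)) | 𝒢 (i - 1)]) ω
          ≤ (P[(fun _ => (1:ℝ)) | 𝒢 (i - 1)]) ω := h6
      _ = 1 := by rw [hconst]
      _ ≤ Real.exp (t ^ 2 * B i ^ 2 / 8) := Real.one_le_exp (by positivity)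
    · -- main case 0 < B i
      set b : ℝ := a i + B i with hbdef
      have hab : a i < b := by simp only [hbdef]; linarith
      set c₀ : ℝ := (b * Real.exp (t * a i) - a i * Real.exp (t * b)) / (b - a i) with hc₀
      set c₁ : ℝ := (Real.exp (t * b) - Real.exp (t * a i)) / (b - a i) with hc₁
      have hc₁nn : 0 ≤ c₁ := by
        refine div_nonneg (sub_nonneg.mpr (Real.exp_le_exp.mpr ?_)) (by linarith)
        exact mul_le_mul_of_nonneg_left hab.le htpos.le
      have hchord : ∀ ω, Real.exp (t * Y i ω) ≤ c₀ + c₁ * Y i ω := fun ω =>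
        exp_chord (a i) b (Y i ω) t (hYlb i hi ω) (hYub i hi ω) hab
      have haffint : Integrable (fun ω => c₀ + c₁ * Y i ω) P :=
        (integrable_const c₀).add ((hYint i hi).const_mul c₁)
      have step1 := condExp_mono (m := 𝒢 (i - 1)) (hexpYint i hi) haffint
        (ae_of_all _ hchord)
      have step2 : (P[(fun ω => c₀ + c₁ * Y i ω) | 𝒢 (i - 1)]) =ᵐ[P]
          fun ω => c₀ + c₁ * (P[Y i | 𝒢 (i - 1)]) ω := by
        have heq : (fun ω => c₀ + c₁ * Y i ω) = (fun _ => c₀) + c₁ • (Y i) := rfl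
        rw [heq]
        have h1 := condExp_add (m := 𝒢 (i - 1)) (μ := P) (integrable_const c₀)
          ((hYint i hi).smul c₁)
        have h2 := condExp_smul (m := 𝒢 (i - 1)) (μ := P) (c₁ : ℝ) (Y i)
        have hconst := condExp_const (hle (i - 1)) c₀ (μ := P)
        filter_upwards [h1, h2] with ω h3 h4
        rw [h3]
        simp only [Pi.add_apply, hconst, h4, Pi.smul_apply, smul_eq_mul]
      have step3 : ∀ᵐ ω ∂P, c₀ + c₁ * (P[Y i | 𝒢 (i - 1)]) ω ≤
          Real.exp (t ^ 2 * B i ^ 2 / 8) := by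
        filter_upwards [hm0, hmb] with ω h1 h2
        set ms : ℝ := min 0 b with hms
        have hmsle : (P[Y i | 𝒢 (i - 1)]) ω ≤ ms := le_min h1 h2
        have hams : a i ≤ ms := le_min (ha0 i hi) hab.le
        have hmsb : ms ≤ b := min_le_right _ _
        have key := hoeffding_chord (a i) b ms t hams hmsb
        have hba : (0:ℝ) < b - a i := by linarith
        have heq2 : c₀ + c₁ * ms =
            ((b - ms) * Real.exp (t * a i) + (ms - a i) * Real.exp (t * b)) / (b - a i) := by
          rw [hc₀, hc₁]; field_simp; ring
        calc c₀ + c₁ * (P[Y i | 𝒢 (i - 1)]) ω ≤ c₀ + c₁ * ms := by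
              exact add_le_add_right (mul_le_mul_of_nonneg_left hmsle hc₁nn) c₀
        _ = ((b - ms) * Real.exp (t * a i) + (ms - a i) * Real.exp (t * b)) / (b - a i) := heq2
        _ ≤ Real.exp (t * ms + t ^ 2 * (b - a i) ^ 2 / 8) := by
              rw [div_le_iff₀ hba]
              calc (b - ms) * Real.exp (t * a i) + (ms - a i) * Real.exp (t * b)
                  ≤ (b - a i) * Real.exp (t * ms + t ^ 2 * (b - a i) ^ 2 / 8) := key
              _ = Real.exp (t * ms + t ^ 2 * (b - a i) ^ 2 / 8) * (b - a i) := by ring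
        _ ≤ Real.exp (t ^ 2 * B i ^ 2 / 8) := by
              refine Real.exp_le_exp.mpr ?_
              have h3 : b - a i = B i := by simp [hbdef]
              have h4 : t * ms ≤ 0 :=
                mul_nonpos_of_nonneg_of_nonpos htpos.le (min_le_left _ _)
              rw [h3]
              linarith
      filter_upwards [step1, step2, step3] with ω h1 h2 h3
      calc (P[(fun ω => Real.exp (t * Y i ω)) | 𝒢 (i - 1)]) ω
          ≤ (P[(fun ω => c₀ + c₁ * Y i ω) | 𝒢 (i - 1)]) ω := h1
      _ = c₀ + c₁ * (P[Y i | 𝒢 (i - 1)]) ω := h2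
      _ ≤ Real.exp (t ^ 2 * B i ^ 2 / 8) := h3
  -- strong measurability of the partial exponential process
  have hWmeasG : ∀ k, Measurable[𝒢 k] (fun ω => Real.exp (t * ∑ i ∈ Finset.Icc 1 k, Y i ω)) := by
    intro k
    have hsum : Measurable[𝒢 k] (fun ω => ∑ i ∈ Finset.Icc 1 k, Y i ω) := by
      apply Finset.measurable_sum
      intro j hj
      exact (hmeas𝒢 k j hj).sub measurable_const
    exact Real.measurable_exp.comp (hsum.const_mul t)
  have hWmeasm : ∀ k, Measurable (fun ω => Real.exp (t * ∑ i ∈ Finset.Icc 1 k, Y i ω)) := by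
    intro k
    have hsum : Measurable (fun ω => ∑ i ∈ Finset.Icc 1 k, Y i ω) :=
      Finset.measurable_sum _ (fun j _ => hYmeas j)
    exact Real.measurable_exp.comp (hsum.const_mul t)
  have key : ∀ k, k ≤ n →
      Integrable (fun ω => Real.exp (t * ∑ i ∈ Finset.Icc 1 k, Y i ω)) P ∧
      ∫ ω, Real.exp (t * ∑ i ∈ Finset.Icc 1 k, Y i ω) ∂P ≤
        Real.exp (∑ i ∈ Finset.Icc 1 k, t ^ 2 * B i ^ 2 / 8) := by
    intro k
    induction k with
    | zero =>
      intro _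
      constructor
      · simpa using integrable_const (1 : ℝ)
      · simp
    | succ k ih =>
      intro hk1
      have hk : k ≤ n := Nat.le_of_succ_le hk1
      obtain ⟨ihint, ihbound⟩ := ih hk
      have hik : k + 1 ∈ Finset.Icc 1 n :=
        Finset.mem_Icc.mpr ⟨Nat.succ_le_succ (Nat.zero_le k), hk1⟩
      have hmem : ∀ i ∈ Finset.Icc 1 k, i ∈ Finset.Icc 1 n := by
        intro i hi
        rw [Finset.mem_Icc] at hi ⊢
        exact ⟨hi.1, hi.2.trans hk⟩
      set W : Ω → ℝ := fun ω => Real.exp (t * ∑ i ∈ Finset.Icc 1 k, Y i ω) with hWdef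
      set g : Ω → ℝ := fun ω => Real.exp (t * Y (k + 1) ω) with hgdef
      have hWg : (fun ω => Real.exp (t * ∑ i ∈ Finset.Icc 1 (k + 1), Y i ω)) = W * g := by
        funext ω
        have hsplit : ∑ i ∈ Finset.Icc 1 (k + 1), Y i ω
            = (∑ i ∈ Finset.Icc 1 k, Y i ω) + Y (k + 1) ω :=
          Finset.sum_Icc_succ_top (Nat.succ_le_succ (Nat.zero_le k)) _
        simp only [Pi.mul_apply, hWdef, hgdef]
        rw [hsplit, mul_add, Real.exp_add]
      have hCw : ∀ ω, ‖W ω‖ ≤ Real.exp (t * ∑ i ∈ Finset.Icc 1 k, (a i + B i)) := by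
        intro ω
        rw [Real.norm_eq_abs, abs_of_pos (Real.exp_pos _)]
        refine Real.exp_le_exp.mpr (mul_le_mul_of_nonneg_left ?_ htpos.le)
        exact Finset.sum_le_sum fun i hi => hYub i (hmem i hi) ω
      have hgbd : ∀ ω, ‖g ω‖ ≤ Real.exp (t * (a (k + 1) + B (k + 1))) := by
        intro ω
        rw [Real.norm_eq_abs, abs_of_pos (Real.exp_pos _)]
        exact Real.exp_le_exp.mpr (mul_le_mul_of_nonneg_left (hYub _ hik ω) htpos.le)
      have hgint : Integrable g P := hexpYint (k + 1) hik
      have hWgint : Integrable (W * g) P := by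
        refine Integrable.bdd_mul (c := Real.exp (t * ∑ i ∈ Finset.Icc 1 k, (a i + B i))) hgint (hWmeasm k).aestronglyMeasurable ?_
        exact ae_of_all _ hCw
      have hstep : P[W * g | 𝒢 k] =ᵐ[P] W * P[g | 𝒢 k] :=
        condExp_mul_of_stronglyMeasurable_left ((hWmeasG k).stronglyMeasurable) hWgint hgint
      have hcond' : P[g | 𝒢 k] ≤ᵐ[P] fun _ => Real.exp (t ^ 2 * B (k + 1) ^ 2 / 8) :=
        hcond (k + 1) hik
      constructor
      · rw [hWg]; exact hWgint
      · rw [hWg]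
        calc ∫ ω, (W * g) ω ∂P = ∫ ω, (P[W * g | 𝒢 k]) ω ∂P := (integral_condExp (hle k)).symm
        _ = ∫ ω, W ω * (P[g | 𝒢 k]) ω ∂P := integral_congr_ae (hstep.mono fun ω h => by
              rw [h]; rfl)
        _ ≤ ∫ ω, W ω * Real.exp (t ^ 2 * B (k + 1) ^ 2 / 8) ∂P := by
              refine integral_mono_ae ?_ (ihint.mul_const _) ?_
              · exact Integrable.bdd_mul integrable_condExp
                  (hWmeasm k).aestronglyMeasurable (ae_of_all _ hCw)
              · filter_upwards [hcond'] with ω h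
                exact mul_le_mul_of_nonneg_left h (Real.exp_pos _).le
        _ = (∫ ω, W ω ∂P) * Real.exp (t ^ 2 * B (k + 1) ^ 2 / 8) := integral_mul_const _ _
        _ ≤ Real.exp (∑ i ∈ Finset.Icc 1 k, t ^ 2 * B i ^ 2 / 8)
              * Real.exp (t ^ 2 * B (k + 1) ^ 2 / 8) :=
              mul_le_mul_of_nonneg_right ihbound (Real.exp_pos _).le
        _ = Real.exp (∑ i ∈ Finset.Icc 1 (k + 1), t ^ 2 * B i ^ 2 / 8) := by
              rw [← Real.exp_add, Finset.sum_Icc_succ_top (Nat.succ_le_succ (Nat.zero_le k))]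
  obtain ⟨hSint, hSbound⟩ := key n le_rfl
  have hgoalset : {ω | ε ≤ ∑ i ∈ Finset.Icc 1 n, (X i ω - μi i)}
      = {ω | ε ≤ ∑ i ∈ Finset.Icc 1 n, Y i ω} := rfl
  rw [hgoalset]
  have hmarkov := ProbabilityTheory.measure_ge_le_exp_mul_mgf
    (X := fun ω => ∑ i ∈ Finset.Icc 1 n, Y i ω) (μ := P) (t := t) ε htpos.le hSint
  have hmgf : ProbabilityTheory.mgf (fun ω => ∑ i ∈ Finset.Icc 1 n, Y i ω) P t
      = ∫ ω, Real.exp (t * ∑ i ∈ Finset.Icc 1 n, Y i ω) ∂P := rfl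
  have hsumB : ∑ i ∈ Finset.Icc 1 n, t ^ 2 * B i ^ 2 / 8 = t ^ 2 * γ / 8 := by
    rw [hγ, Finset.mul_sum, Finset.sum_div]
  calc (P {ω | ε ≤ ∑ i ∈ Finset.Icc 1 n, Y i ω}).toReal
      ≤ Real.exp (-t * ε) * ProbabilityTheory.mgf (fun ω => ∑ i ∈ Finset.Icc 1 n, Y i ω) P t :=
        hmarkov
  _ ≤ Real.exp (-t * ε) * Real.exp (t ^ 2 * γ / 8) := by
      rw [hmgf]
      refine mul_le_mul_of_nonneg_left ?_ (Real.exp_pos _).le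
      rw [← hsumB]
      exact hSbound
  _ = Real.exp (-t * ε + t ^ 2 * γ / 8) := (Real.exp_add _ _).symm
  _ = Real.exp (-2 * ε ^ 2 / γ) := by
      congr 1
      rw [ht]
      field_simp
      ring
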